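/- Let B ⊂ ℝ^n be a 0-symmetric convex body and H a linear hyperplane with e ∉ H. If for two parameters 0 ≤ t' < t* the sections B ∩ (t'·e + H) and B ∩ (t*·e + H) are translates of one another (equal up to translation, both nonempty with nonempty relative interior in their affine hyperplanes), then the central section B ∩ H is also a translate of B ∩ (t*·e + H). -/

import Mathlib

open Set Filter Topology Pointwise

/-- Rådström-type cancellation: if `X + Z ⊆ Y + Z` (expressed pointwise) with `Z`
bounded nonempty and `Y` closed convex, then `X ⊆ Y`. -/
lemma radstrom_cancel {E : Type*} [NormedAddCommGroup E] [NormedSpace ℝ E]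
    {X Y Z : Set E} (hY : Convex ℝ Y) (hYc : IsClosed Y)
    (hZb : Bornology.IsBounded Z) (hZne : Z.Nonempty)
    (h : ∀ x ∈ X, ∀ z ∈ Z, ∃ y ∈ Y, ∃ z' ∈ Z, x + z = y + z') : X ⊆ Y := by
  obtain ⟨C, hC⟩ := hZb.exists_norm_le
  intro x hx
  choose! y hy f hf heq using h x hx
  obtain ⟨k0, hk0⟩ := hZne
  let k : ℕ → E := fun n => Nat.rec k0 (fun _ kk => f kk) n
  have hksucc : ∀ n, k (n + 1) = f (k n) := fun n => rfl
  have km : ∀ n, k n ∈ Z := by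
    intro n
    induction n with
    | zero => exact hk0
    | succ n ih => rw [hksucc]; exact hf _ ih
  have key : ∀ n : ℕ, (n : ℝ) • x + k 0 = (∑ i ∈ Finset.range n, y (k i)) + k n := by
    intro n
    induction n with
    | zero => simp
    | succ n ih =>
      rw [Finset.sum_range_succ]
      push_cast
      have h1 : x + k n = y (k n) + f (k n) := heq _ (km n)
      calc ((n : ℝ) + 1) • x + k 0 = ((n : ℝ) • x + k 0) + x := by
            rw [add_smul, one_smul]; abel
        _ = ((∑ i ∈ Finset.range n, y (k i)) + k n) + x := by rw [ih]
        _ = (∑ i ∈ Finset.range n, y (k i)) + (x + k n) := by abel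
        _ = (∑ i ∈ Finset.range n, y (k i)) + (y (k n) + f (k n)) := by rw [h1]
        _ = ((∑ i ∈ Finset.range n, y (k i)) + y (k n)) + k (n + 1) := by
            rw [hksucc n]; abel
  have hmem : ∀ n : ℕ, 1 ≤ n → x + (1 / (n : ℝ)) • (k 0 - k n) ∈ Y := by
    intro n hn
    have hn' : (n : ℝ) ≠ 0 := Nat.cast_ne_zero.2 (by omega)
    have h2 : (∑ i ∈ Finset.range n, y (k i)) = (n : ℝ) • x + (k 0 - k n) := by
      have hk := key n
      calc (∑ i ∈ Finset.range n, y (k i))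
          = ((∑ i ∈ Finset.range n, y (k i)) + k n) - k n := by abel
        _ = ((n : ℝ) • x + k 0) - k n := by rw [← hk]
        _ = (n : ℝ) • x + (k 0 - k n) := by abel
    have h3 : x + (1 / (n : ℝ)) • (k 0 - k n)
        = ∑ i ∈ Finset.range n, (1 / (n : ℝ)) • y (k i) := by
      rw [← Finset.smul_sum, h2, smul_add, smul_smul]
      have : (1 / (n : ℝ)) * (n : ℝ) = 1 := by field_simp
      rw [this, one_smul]
    rw [h3]
    refine hY.sum_mem (fun i _ => by positivity) ?_ (fun i _ => hy _ (km i))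
    rw [Finset.sum_const, Finset.card_range, nsmul_eq_mul]
    field_simp
  have hCnn : 0 ≤ C := le_trans (norm_nonneg _) (hC k0 hk0)
  have h0 : Tendsto (fun n : ℕ => (1 / (n : ℝ)) • (k 0 - k n)) atTop (𝓝 0) := by
    refine squeeze_zero_norm (a := fun n : ℕ => (2 * C) / (n : ℝ)) ?_
      (tendsto_const_div_atTop_nhds_zero_nat (2 * C))
    intro n
    rw [norm_smul]
    have hb : ‖k 0 - k n‖ ≤ 2 * C := by
      calc ‖k 0 - k n‖ ≤ ‖k 0‖ + ‖k n‖ := norm_sub_le _ _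
        _ ≤ C + C := add_le_add (hC _ (km 0)) (hC _ (km n))
        _ = 2 * C := by ring
    have hnn : (0 : ℝ) ≤ 1 / (n : ℝ) := by positivity
    calc ‖(1 / (n : ℝ))‖ * ‖k 0 - k n‖ ≤ ‖(1 / (n : ℝ))‖ * (2 * C) := by
          exact mul_le_mul_of_nonneg_left hb (norm_nonneg _)
      _ = (1 / (n : ℝ)) * (2 * C) := by rw [Real.norm_eq_abs, abs_of_nonneg hnn]
      _ = (2 * C) / (n : ℝ) := by ring
  have htend : Tendsto (fun n : ℕ => x + (1 / (n : ℝ)) • (k 0 - k n)) atTop (𝓝 x) := by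
    have h1 : Tendsto (fun n : ℕ => x + (1 / (n : ℝ)) • (k 0 - k n)) atTop (𝓝 (x + 0)) :=
      Tendsto.add tendsto_const_nhds h0
    rwa [add_zero] at h1
  exact hYc.mem_of_tendsto htend (eventually_atTop.2 ⟨1, fun n hn => hmem n hn⟩)

/-- If two parallel sections of a 0-symmetric convex body at heights `0 ≤ t' < t⋆`
are translates of one another, then the central section is also a translate of the
section at height `t⋆`. -/
theorem central_section_translate {E : Type*} [NormedAddCommGroup E] [NormedSpace ℝ E]
    [FiniteDimensional ℝ E]
    (B : Set E) (hBconv : Convex ℝ B) (hBcomp : IsCompact B)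
    (hBsymm : ∀ x ∈ B, -x ∈ B) (hB0 : 0 ∈ interior B)
    (H : Submodule ℝ E) (hH : Module.finrank ℝ H = Module.finrank ℝ E - 1)
    (e : E) (he : e ∉ H) (t' tstar : ℝ) (ht' : 0 ≤ t') (htt : t' < tstar)
    (hne1 : (B ∩ {x | x - t' • e ∈ H}).Nonempty)
    (hne2 : (B ∩ {x | x - tstar • e ∈ H}).Nonempty)
    (hri1 : (intrinsicInterior ℝ (B ∩ {x | x - t' • e ∈ H})).Nonempty)
    (hri2 : (intrinsicInterior ℝ (B ∩ {x | x - tstar • e ∈ H})).Nonempty)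
    (htrans : ∃ v : E, B ∩ {x | x - t' • e ∈ H}
      = (fun z => z + v) '' (B ∩ {x | x - tstar • e ∈ H})) :
    ∃ v : E, B ∩ (H : Set E) = (fun z => z + v) '' (B ∩ {x | x - tstar • e ∈ H}) := by
  obtain ⟨v, hv⟩ := htrans
  -- interpolation property of sections, from convexity of `B` and linearity of `H`
  have interp : ∀ (a b lam mu : ℝ) (x z : E), 0 ≤ lam → 0 ≤ mu → lam + mu = 1 →
      x ∈ B ∩ {w | w - a • e ∈ H} → z ∈ B ∩ {w | w - b • e ∈ H} →
      lam • x + mu • z ∈ B ∩ {w | w - (lam * a + mu * b) • e ∈ H} := by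
    rintro a b lam mu x z hl hm hlm ⟨hxB, hxH⟩ ⟨hzB, hzH⟩
    refine ⟨hBconv hxB hzB hl hm hlm, ?_⟩
    show lam • x + mu • z - (lam * a + mu * b) • e ∈ H
    have hid : lam • x + mu • z - (lam * a + mu * b) • e
        = lam • (x - a • e) + mu • (z - b • e) := by module
    rw [hid]
    exact H.add_mem (H.smul_mem _ hxH) (H.smul_mem _ hzH)
  -- reflection property, from symmetry of `B`
  have hneg : ∀ (t : ℝ) (x : E), x ∈ B ∩ {w | w - t • e ∈ H} →
      -x ∈ B ∩ {w | w - (-t) • e ∈ H} := by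
    rintro t x ⟨hxB, hxH⟩
    refine ⟨hBsymm x hxB, ?_⟩
    show -x - (-t) • e ∈ H
    have hid : -x - (-t) • e = -(x - t • e) := by module
    rw [hid]
    exact H.neg_mem hxH
  set K : Set E := B ∩ {x | x - tstar • e ∈ H} with hK
  have hKne : K.Nonempty := hne2
  have hKcomp : IsCompact K := by
    refine hBcomp.inter_right ?_
    have : {x : E | x - tstar • e ∈ H} = (fun x => x - tstar • e) ⁻¹' (H : Set E) := rfl
    rw [this]
    exact (Submodule.closed_of_finiteDimensional H).preimage
      (continuous_id.sub continuous_const)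
  have hKconv : Convex ℝ K := by
    intro x hx z hz lam mu hl hm hlm
    have := interp tstar tstar lam mu x z hl hm hlm hx hz
    rwa [show lam * tstar + mu * tstar = tstar by rw [← add_mul, hlm, one_mul]] at this
  have hv1 : ∀ m ∈ K, m + v ∈ B ∩ {x | x - t' • e ∈ H} := by
    intro m hm; rw [hv]; exact mem_image_of_mem _ hm
  have hv2 : ∀ x ∈ B ∩ {w | w - t' • e ∈ H}, ∃ m ∈ K, x = m + v := by
    intro x hx
    rw [hv] at hx
    obtain ⟨m, hm, hmx⟩ := hx
    exact ⟨m, hm, hmx.symm⟩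
  rcases eq_or_lt_of_le ht' with h0 | h0
  · -- trivial case t' = 0
    refine ⟨v, ?_⟩
    rw [← hv, ← h0]
    ext x
    simp [Set.mem_inter_iff]
  -- main case 0 < t'
  have hts : 0 < tstar := lt_of_le_of_lt ht' htt
  have hd : (0 : ℝ) < tstar - t' := by linarith
  have hd0 : tstar - t' ≠ 0 := ne_of_gt hd
  have hts0 : tstar ≠ 0 := ne_of_gt hts
  have hsum0 : tstar + t' ≠ 0 := by positivity
  set a : ℝ := (tstar - t') / (2 * tstar) with ha
  have ha0 : 0 < a := by rw [ha]; positivity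
  have ha1 : a < 1 := by rw [ha, div_lt_one (by positivity)]; linarith
  have hsmul_comp : ∀ (r : ℝ) (A : Set E), IsCompact A → IsCompact (r • A) := by
    intro r A hA
    rw [← Set.image_smul]
    exact hA.image (continuous_const_smul r)
  have hKnegne : (-K).Nonempty := by
    obtain ⟨m, hm⟩ := hKne
    exact ⟨-m, Set.neg_mem_neg.2 hm⟩
  have haK : ((fun u => a • u + v) '' K) ⊆ a • (-K) := by
    apply radstrom_cancel (Z := (1 - a) • (-K)) ((hKconv.neg).smul a)
      (hsmul_comp a (-K) hKcomp.neg).isClosed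
      (hsmul_comp (1 - a) (-K) hKcomp.neg).isBounded
      (hKnegne.smul_set)
    rintro x ⟨u, hu, rfl⟩ z ⟨w, hw, rfl⟩
    have hw' : -w ∈ K := hw
    have hmw : w ∈ B ∩ {x | x - (-tstar) • e ∈ H} := by
      have := hneg tstar (-w) hw'
      rwa [neg_neg] at this
    have h1 : a • u + (1 - a) • w ∈ B ∩ {x | x - (-t') • e ∈ H} := by
      have h2 := interp tstar (-tstar) a (1 - a) u w (le_of_lt ha0) (by linarith)
        (by ring) hu hmw
      rwa [show a * tstar + (1 - a) * (-tstar) = -t' by rw [ha]; field_simp; ring] at h2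
    have h3 := hneg _ _ h1
    rw [neg_neg] at h3
    obtain ⟨m, hm, hmx⟩ := hv2 _ h3
    refine ⟨a • (-m), ⟨-m, Set.neg_mem_neg.2 hm, rfl⟩,
      (1 - a) • (-m), ⟨-m, Set.neg_mem_neg.2 hm, rfl⟩, ?_⟩
    have hmx' : a • u + (1 - a) • w = -(m + v) := by
      rw [← hmx, neg_neg]
    calc a • u + v + (1 - a) • w = (a • u + (1 - a) • w) + v := by abel
      _ = -(m + v) + v := by rw [hmx']
      _ = -m := by abel
      _ = a • (-m) + (1 - a) • (-m) := by module
  -- symmetry of K up to a shift: K + (2 t⋆/(t⋆ - t')) v ⊆ -K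
  have hsym : ∀ u ∈ K, -(u + (2 * tstar / (tstar - t')) • v) ∈ K := by
    intro u hu
    obtain ⟨w, hw, hwe⟩ := haK (mem_image_of_mem _ hu)
    have ha0' : a ≠ 0 := ne_of_gt ha0
    have hwu : w = u + (2 * tstar / (tstar - t')) • v := by
      have : w = (1 / a) • (a • u + v) := by
        rw [← hwe, smul_smul, one_div, inv_mul_cancel₀ ha0', one_smul]
      rw [this, smul_add, smul_smul, one_div, inv_mul_cancel₀ ha0', one_smul]
      congr 1
      rw [ha]
      congr 1
      field_simp
    rw [← hwu]
    exact Set.mem_neg.1 hw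
  -- the "⊇" inclusion for the central section
  have hge : ∀ w ∈ K, w + (tstar / (tstar - t')) • v ∈ B ∩ (H : Set E) := by
    intro w hw
    have hp : w + (2 * tstar / (tstar - t')) • v ∈ B ∩ {x | x - (-tstar) • e ∈ H} := by
      have := hneg tstar _ (hsym w hw)
      rwa [neg_neg] at this
    have hq : w + v ∈ B ∩ {x | x - t' • e ∈ H} := hv1 w hw
    have hμ0 : (0 : ℝ) ≤ t' / (tstar + t') := by positivity
    have hμ1 : (0 : ℝ) ≤ 1 - t' / (tstar + t') := by
      rw [sub_nonneg, div_le_one (by positivity)]; linarith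
    have h2 := interp (-tstar) t' (t' / (tstar + t')) (1 - t' / (tstar + t')) _ _
      hμ0 hμ1 (by ring) hp hq
    have e1 : t' / (tstar + t') * (-tstar) + (1 - t' / (tstar + t')) * t' = 0 := by
      field_simp
      ring
    have e2 : (t' / (tstar + t')) • (w + (2 * tstar / (tstar - t')) • v)
        + (1 - t' / (tstar + t')) • (w + v) = w + (tstar / (tstar - t')) • v := by
      match_scalars <;> field_simp <;> ring
    rw [e1, e2] at h2
    refine ⟨h2.1, ?_⟩
    have h3 := h2.2
    simpa using h3
  -- the "⊆" inclusion for the central section, again by cancellation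
  set b : ℝ := (tstar - t') / tstar with hb
  have hb0 : 0 < b := by rw [hb]; positivity
  have hb1 : b < 1 := by rw [hb, div_lt_one hts]; linarith
  have hbK : (b • (B ∩ (H : Set E))) ⊆ (fun z => z + v) '' (b • K) := by
    have hYconv : Convex ℝ ((fun z => z + v) '' (b • K)) := by
      rw [← Set.add_singleton]
      exact (hKconv.smul b).add (convex_singleton v)
    have hYcomp : IsCompact ((fun z => z + v) '' (b • K)) :=
      (hsmul_comp b K hKcomp).image (continuous_add_right v)
    apply radstrom_cancel hYconv hYcomp.isClosed
      (hsmul_comp (1 - b) K hKcomp).isBounded (hKne.smul_set)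
    rintro x ⟨s, hs, rfl⟩ z ⟨kk, hkk, rfl⟩
    have hs0 : s ∈ B ∩ {w | w - (0 : ℝ) • e ∈ H} := ⟨hs.1, by simpa using hs.2⟩
    have h2 := interp 0 tstar b (1 - b) s kk (le_of_lt hb0) (by linarith) (by ring) hs0 hkk
    have e1 : b * 0 + (1 - b) * tstar = t' := by rw [hb]; field_simp; ring
    rw [e1] at h2
    obtain ⟨m, hm, hmx⟩ := hv2 _ h2
    refine ⟨b • m + v, ⟨b • m, ⟨m, hm, rfl⟩, rfl⟩, (1 - b) • m, ⟨m, hm, rfl⟩, ?_⟩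
    calc b • s + (1 - b) • kk = m + v := hmx.symm ▸ rfl
      _ = (b • m + v) + (1 - b) • m := by module
  -- conclusion
  refine ⟨(tstar / (tstar - t')) • v, ?_⟩
  ext x
  constructor
  · intro hx
    obtain ⟨y, hy, hyx0⟩ := hbK (Set.smul_mem_smul_set hx)
    obtain ⟨m, hm, rfl⟩ := hy
    have hyx : b • m + v = b • x := hyx0
    refine ⟨m, hm, ?_⟩
    show m + (tstar / (tstar - t')) • v = x
    have hb0' : b ≠ 0 := ne_of_gt hb0
    have hkey : b • x = b • (m + (tstar / (tstar - t')) • v) := by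
      rw [← hyx, smul_add, smul_smul]
      have : b * (tstar / (tstar - t')) = 1 := by rw [hb]; field_simp
      rw [this, one_smul]
    exact (smul_right_injective E hb0' hkey).symm
  · rintro ⟨m, hm, rfl⟩
    exact hge m hm
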